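/- Let G be a finite p-group with |G : G'| = p^2, |γ₃(G) : γ₄(G)| = p, and C = C_G(G'/γ₄(G)) the centralizer of G'/γ₄(G) in G. Then C is a maximal subgroup of G and C' ≤ γ₄(G). -/

import Mathlib

open Subgroup
open scoped Pointwise
open scoped commutatorElement

private lemma lcs_map_surj {G H : Type*} [Group G] [Group H] (f : G →* H)
    (hf : Function.Surjective f) (n : ℕ) :
    ((⊤ : Subgroup G).lowerCentralSeries n).map f = (⊤ : Subgroup H).lowerCentralSeries n := by
  induction n with
  | zero => exact Subgroup.map_top_of_surjective f hf
  | succ n ih =>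
    show Subgroup.map f ⁅(⊤ : Subgroup G).lowerCentralSeries n, ⊤⁆ = ⁅(⊤ : Subgroup H).lowerCentralSeries n, ⊤⁆
    rw [Subgroup.map_commutator, ih, Subgroup.map_top_of_surjective f hf]

private lemma comm_mul_left {R : Type*} [Group R] (x y z : R)
    (h : ∀ g : R, Commute ⁅y, z⁆ g) : ⁅x * y, z⁆ = ⁅x, z⁆ * ⁅y, z⁆ := by
  have e : ⁅x * y, z⁆ = ⁅x, z⁆ * ((z * x * z⁻¹) * (⁅y, z⁆ * (z * x * z⁻¹)⁻¹)) := by group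
  rw [e, (h (z * x * z⁻¹)⁻¹).eq]; group

private lemma comm_inv_left {R : Type*} [Group R] (x z : R)
    (h : ∀ g : R, Commute ⁅x, z⁆ g) : ⁅x⁻¹, z⁆ = ⁅x, z⁆⁻¹ := by
  have e : ⁅x⁻¹, z⁆ = x⁻¹ * (⁅x, z⁆⁻¹ * x) := by group
  rw [e, ((h x).inv_left).eq]; group

private lemma comm_mul_right {R : Type*} [Group R] (x y z : R)
    (h : ∀ g : R, Commute ⁅x, z⁆ g) : ⁅x, y * z⁆ = ⁅x, y⁆ * ⁅x, z⁆ := by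
  have e : ⁅x, y * z⁆ = ⁅x, y⁆ * (y * (⁅x, z⁆ * y⁻¹)) := by group
  rw [e, (h y⁻¹).eq]; group

private lemma comm_inv_right {R : Type*} [Group R] (x z : R)
    (h : ∀ g : R, Commute ⁅x, z⁆ g) : ⁅x, z⁻¹⁆ = ⁅x, z⁆⁻¹ := by
  have e : ⁅x, z⁻¹⁆ = z⁻¹ * (⁅x, z⁆⁻¹ * z) := by group
  rw [e, ((h z).inv_left).eq]; group

private lemma commutator_le_of_gen {R : Type*} [Group R] (a b : R) (W : Subgroup R)
    (hZ : commutator R ≤ Subgroup.center R) (hW : ⁅a, b⁆ ∈ W)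
    (hgen : Subgroup.closure {a, b} ⊔ commutator R = ⊤) :
    commutator R ≤ W := by
  have hcen : ∀ x y g : R, Commute ⁅x, y⁆ g := fun x y g => by
    have := hZ (commutator_mem_commutator (mem_top x) (mem_top y) :
      ⁅x, y⁆ ∈ ⁅(⊤ : Subgroup R), ⊤⁆)
    exact ((Subgroup.mem_center_iff.mp this) g).symm
  have hcenel : ∀ c : R, c ∈ commutator R → ∀ g : R, Commute c g := fun c hc g =>
    ((Subgroup.mem_center_iff.mp (hZ hc)) g).symm
  let T : Subgroup R :=
    { carrier := {y | ⁅a, y⁆ ∈ W ∧ ⁅b, y⁆ ∈ W}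
      one_mem' := ⟨by rw [commutatorElement_one_right]; exact W.one_mem,
        by rw [commutatorElement_one_right]; exact W.one_mem⟩
      mul_mem' := by
        rintro y z ⟨h1, h2⟩ ⟨h3, h4⟩
        exact ⟨by rw [comm_mul_right a y z (hcen a z)]; exact W.mul_mem h1 h3,
          by rw [comm_mul_right b y z (hcen b z)]; exact W.mul_mem h2 h4⟩
      inv_mem' := by
        rintro y ⟨h1, h2⟩
        exact ⟨by rw [comm_inv_right a y (hcen a y)]; exact W.inv_mem h1,
          by rw [comm_inv_right b y (hcen b y)]; exact W.inv_mem h2⟩ }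
  have hTle : Subgroup.closure {a, b} ⊔ commutator R ≤ T := by
    apply sup_le
    · rw [Subgroup.closure_le]
      rintro x (rfl | rfl)
      · exact ⟨by rw [commutatorElement_self]; exact W.one_mem,
          by rw [← commutatorElement_inv]; exact W.inv_mem hW⟩
      · exact ⟨hW, by rw [commutatorElement_self]; exact W.one_mem⟩
    · intro c hc
      constructor
      · rw [commutatorElement_eq_one_iff_commute.mpr ((hcenel c hc a).symm)]
        exact W.one_mem
      · rw [commutatorElement_eq_one_iff_commute.mpr ((hcenel c hc b).symm)]
        exact W.one_mem
  have hT : ∀ y : R, y ∈ T := fun y => hTle (by rw [hgen]; exact Subgroup.mem_top y)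
  let S : Subgroup R :=
    { carrier := {x | ∀ y : R, ⁅x, y⁆ ∈ W}
      one_mem' := fun y => by rw [commutatorElement_one_left]; exact W.one_mem
      mul_mem' := by
        intro x z hx hz y
        rw [comm_mul_left x z y (hcen z y)]
        exact W.mul_mem (hx y) (hz y)
      inv_mem' := by
        intro x hx y
        rw [comm_inv_left x y (hcen x y)]
        exact W.inv_mem (hx y) }
  have hSle : Subgroup.closure {a, b} ⊔ commutator R ≤ S := by
    apply sup_le
    · rw [Subgroup.closure_le]
      rintro x (rfl | rfl)
      · exact fun y => (hT y).1
      · exact fun y => (hT y).2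
    · intro c hc y
      rw [commutatorElement_eq_one_iff_commute.mpr (hcenel c hc y)]
      exact W.one_mem
  have hall : ∀ x y : R, ⁅x, y⁆ ∈ W :=
    fun x y => hSle (by rw [hgen]; exact Subgroup.mem_top x) y
  rw [commutator_eq_closure, Subgroup.closure_le]
  rintro t ⟨x, y, rfl⟩
  exact hall x y

private lemma two_gen {p : ℕ} (hp : p.Prime) (A : Type*) [Group A] [Finite A]
    (hcard : Nat.card A = p ^ 2) : ∃ a b : A, Subgroup.closure {a, b} = ⊤ := by
  have hnt : Nontrivial A := Finite.one_lt_card_iff_nontrivial.mp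
    (by rw [hcard]; exact Nat.one_lt_pow (by norm_num) hp.one_lt)
  obtain ⟨a, ha⟩ := exists_ne (1 : A)
  have hordvd : orderOf a ∣ p ^ 2 := hcard ▸ orderOf_dvd_natCard a
  have hord1 : orderOf a ≠ 1 := fun h => ha (orderOf_eq_one_iff.mp h)
  have hpord : p ∣ orderOf a := by
    obtain ⟨k, hk, hkeq⟩ := (Nat.dvd_prime_pow hp).mp hordvd
    rcases Nat.eq_zero_or_pos k with hk0 | hk0
    · rw [hk0, pow_zero] at hkeq; exact absurd hkeq hord1
    · exact hkeq ▸ dvd_pow_self p (Nat.pos_iff_ne_zero.mp hk0)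
  have hHcard : Nat.card (Subgroup.zpowers a) = orderOf a := Nat.card_zpowers a
  have hmul : Nat.card (Subgroup.zpowers a) * (Subgroup.zpowers a).index = p ^ 2 :=
    hcard ▸ Subgroup.card_mul_index _
  have hidxp : (Subgroup.zpowers a).index ∣ p := by
    obtain ⟨m, hm⟩ := hpord
    rw [hHcard, hm, pow_two, mul_assoc] at hmul
    have := Nat.eq_of_mul_eq_mul_left hp.pos hmul
    exact Dvd.intro_left m this
  by_cases hHt : (Subgroup.zpowers a).index = 1
  · refine ⟨a, 1, ?_⟩
    rw [eq_top_iff, ← Subgroup.index_eq_one.mp hHt]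
    exact Subgroup.zpowers_le.mpr (Subgroup.subset_closure (Set.mem_insert a {1}))
  · have hidx : (Subgroup.zpowers a).index = p :=
      ((Nat.Prime.eq_one_or_self_of_dvd hp _ hidxp).resolve_left hHt)
    have : ∃ b, b ∉ Subgroup.zpowers a := by
      by_contra h
      push_neg at h
      exact hHt (Subgroup.index_eq_one.mpr (Subgroup.eq_top_iff' _ |>.mpr h))
    obtain ⟨b, hb⟩ := this
    refine ⟨a, b, ?_⟩
    have hle : Subgroup.zpowers a ≤ Subgroup.closure {a, b} :=
      Subgroup.zpowers_le.mpr (Subgroup.subset_closure (Set.mem_insert a {b}))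
    have hKdvd : (Subgroup.closure {a, b}).index ∣ p :=
      hidx ▸ Subgroup.index_dvd_of_le hle
    have hKne : (Subgroup.closure {a, b}).index ≠ p := by
      intro hKp
      have hrel := Subgroup.relIndex_mul_index hle
      rw [hidx, hKp] at hrel
      have : (Subgroup.zpowers a).relIndex (Subgroup.closure {a, b}) = 1 :=
        Nat.eq_of_mul_eq_mul_right hp.pos (by simpa using hrel)
      exact hb (Subgroup.relIndex_eq_one.mp this
        (Subgroup.subset_closure (Set.mem_insert_of_mem a rfl)))
    exact Subgroup.index_eq_one.mp
      ((Nat.Prime.eq_one_or_self_of_dvd hp _ hKdvd).resolve_right hKne)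

private lemma lcs2_bot_central {R : Type*} [Group R] (h : (⊤ : Subgroup R).lowerCentralSeries 2 = ⊥) :
    commutator R ≤ Subgroup.center R := by
  intro c hc
  rw [Subgroup.mem_center_iff]
  intro g
  have : ⁅c, g⁆ ∈ (⊤ : Subgroup R).lowerCentralSeries 2 :=
    commutator_mem_commutator (by rwa [Subgroup.top_lowerCentralSeries_one]) (Subgroup.mem_top g)
  rw [h, Subgroup.mem_bot] at this
  exact (commutatorElement_eq_one_iff_commute.mp this).symm.eq

private lemma core {p : ℕ} (hp : p.Prime) (Q : Type*) [Group Q] [Finite Q]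
    (h3 : (⊤ : Subgroup Q).lowerCentralSeries 3 = ⊥)
    (hZp : Nat.card ((⊤ : Subgroup Q).lowerCentralSeries 2) = p)
    (hidx : (commutator Q).index = p ^ 2) :
    (Subgroup.centralizer (commutator Q : Set Q)).index = p ∧
      ∀ u ∈ Subgroup.centralizer (commutator Q : Set Q),
        ∀ v ∈ Subgroup.centralizer (commutator Q : Set Q), Commute u v := by
  set Z := (⊤ : Subgroup Q).lowerCentralSeries 2 with hZdef
  set Cc := Subgroup.centralizer (commutator Q : Set Q) with hCcdef
  -- Z is central
  have hZc : ∀ z ∈ Z, ∀ g : Q, Commute z g := by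
    intro z hz g
    have : ⁅z, g⁆ ∈ (⊤ : Subgroup Q).lowerCentralSeries 3 :=
      commutator_mem_commutator hz (Subgroup.mem_top g)
    rw [h3, Subgroup.mem_bot] at this
    exact commutatorElement_eq_one_iff_commute.mp this
  -- two generators mod the commutator subgroup
  have hcardA : Nat.card (Q ⧸ commutator Q) = p ^ 2 := hidx
  obtain ⟨a', b', hab'⟩ := two_gen hp (Q ⧸ commutator Q) hcardA
  obtain ⟨a, rfl⟩ := QuotientGroup.mk'_surjective (commutator Q) a'
  obtain ⟨b, rfl⟩ := QuotientGroup.mk'_surjective (commutator Q) b'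
  have hgenQ : Subgroup.closure {a, b} ⊔ commutator Q = ⊤ := by
    have hmap : (Subgroup.closure {a, b}).map (QuotientGroup.mk' (commutator Q)) = ⊤ := by
      rw [MonoidHom.map_closure, Set.image_pair, hab']
    have := congrArg (Subgroup.comap (QuotientGroup.mk' (commutator Q))) hmap
    rwa [Subgroup.comap_map_eq, QuotientGroup.ker_mk', Subgroup.comap_top] at this
  -- pass to the class-two quotient R = Q / Z
  set ρ := QuotientGroup.mk' Z with hρdef
  have hρs : Function.Surjective ρ := QuotientGroup.mk'_surjective Z
  have hR2 : (⊤ : Subgroup (Q ⧸ Z)).lowerCentralSeries 2 = ⊥ := by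
    rw [← lcs_map_surj ρ hρs 2, Subgroup.map_eq_bot_iff, QuotientGroup.ker_mk']
  have hcommR : (commutator Q).map ρ = commutator (Q ⧸ Z) := by
    rw [commutator_def, Subgroup.map_commutator, Subgroup.map_top_of_surjective ρ hρs,
      commutator_def]
  have hgenR : Subgroup.closure {ρ a, ρ b} ⊔ commutator (Q ⧸ Z) = ⊤ := by
    have := congrArg (Subgroup.map ρ) hgenQ
    rwa [Subgroup.map_sup, MonoidHom.map_closure, Set.image_pair, hcommR,
      Subgroup.map_top_of_surjective ρ hρs] at this
  have hcommle : commutator (Q ⧸ Z) ≤ Subgroup.zpowers ⁅ρ a, ρ b⁆ :=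
    commutator_le_of_gen (ρ a) (ρ b) _ (lcs2_bot_central hR2)
      (Subgroup.mem_zpowers _) hgenR
  -- pull back: commutator Q ≤ zpowers w ⊔ Z, where w = ⁅a,b⁆
  set w := ⁅a, b⁆ with hwdef
  have hw : commutator Q ≤ Subgroup.zpowers w ⊔ Z := by
    have h1 : commutator Q ≤ Subgroup.comap ρ (Subgroup.zpowers (ρ w)) := by
      refine le_trans (Subgroup.le_comap_map ρ _) (Subgroup.comap_mono ?_)
      rw [hcommR]
      refine le_trans hcommle ?_
      rw [hwdef, map_commutatorElement]
    have h2 : ρ w = ρ ⁅a, b⁆ := rfl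
    have h3 : Subgroup.comap ρ (Subgroup.zpowers (ρ w)) = Subgroup.zpowers w ⊔ Z := by
      rw [← MonoidHom.map_zpowers, Subgroup.comap_map_eq, QuotientGroup.ker_mk']
    rwa [h3] at h1
  have hwmem : w ∈ commutator Q := by
    rw [commutator_def]
    exact commutator_mem_commutator (Subgroup.mem_top a) (Subgroup.mem_top b)
  haveI hZn : Z.Normal := by rw [hZdef]; infer_instance
  -- decomposition of elements of the commutator subgroup
  have hdecomp : ∀ x ∈ commutator Q, ∃ (k : ℤ) (z : Q), z ∈ Z ∧ x = w ^ k * z := by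
    intro x hx
    have hxs : x ∈ ((Subgroup.zpowers w : Set Q) * (Z : Set Q)) := by
      rw [← Subgroup.mul_normal (Subgroup.zpowers w) Z]
      exact hw hx
    obtain ⟨u, hu, z, hz, hx'⟩ := Set.mem_mul.mp hxs
    obtain ⟨k, hk⟩ := Subgroup.mem_zpowers_iff.mp hu
    exact ⟨k, z, hz, by rw [hk, hx']⟩
  -- commutator subgroup is abelian and central-friendly
  have habel : ∀ x ∈ commutator Q, ∀ y ∈ commutator Q, Commute x y := by
    intro x hx y hy
    obtain ⟨i, z1, hz1, rfl⟩ := hdecomp x hx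
    obtain ⟨j, z2, hz2, rfl⟩ := hdecomp y hy
    have hww : Commute (w ^ i) (w ^ j) := (Commute.refl w).zpow_zpow i j
    exact Commute.mul_left
      (Commute.mul_right hww ((hZc z2 hz2 (w ^ i)).symm))
      (Commute.mul_right (hZc z1 hz1 (w ^ j)) (hZc z1 hz1 z2))
  have hQ'C : commutator Q ≤ Cc := by
    intro x hx
    rw [hCcdef, Subgroup.mem_centralizer_iff]
    intro h hh
    exact (habel h hh x hx).eq
  -- the homomorphism ψ : Q → Z, g ↦ ⁅g, w⁆
  have hmemZ : ∀ g : Q, ⁅g, w⁆ ∈ Z := by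
    intro g
    have : ⁅w, g⁆ ∈ Z := commutator_mem_commutator
      (by rwa [Subgroup.top_lowerCentralSeries_one]) (Subgroup.mem_top g)
    rw [← commutatorElement_inv]
    exact Z.inv_mem this
  have hcenZ : ∀ g : Q, ∀ t : Q, Commute ⁅g, w⁆ t := fun g t => hZc _ (hmemZ g) t
  let ψ : Q →* Z :=
    { toFun := fun g => ⟨⁅g, w⁆, hmemZ g⟩
      map_one' := by
        ext
        simp [commutatorElement_one_left]
      map_mul' := by
        intro g h
        ext
        exact comm_mul_left g h w (hcenZ h) }
  have hker : ψ.ker = Cc := by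
    ext g
    constructor
    · intro hg
      have hgw : ⁅g, w⁆ = 1 := congrArg Subtype.val (MonoidHom.mem_ker.mp hg)
      have hcgw : Commute g w := commutatorElement_eq_one_iff_commute.mp hgw
      rw [hCcdef, Subgroup.mem_centralizer_iff]
      intro x hx
      obtain ⟨k, z, hz, rfl⟩ := hdecomp x hx
      exact (Commute.mul_right (hcgw.zpow_right k) ((hZc z hz g).symm)).symm.eq
    · intro hg
      have : Commute g w := ((Subgroup.mem_centralizer_iff.mp hg) w hwmem).symm
      rw [MonoidHom.mem_ker]
      ext
      exact commutatorElement_eq_one_iff_commute.mpr this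
  -- the index computation
  have hdvd : Cc.index ∣ p := by
    rw [← hker, Subgroup.index_ker]
    exact hZp ▸ Subgroup.card_subgroup_dvd_card ψ.range
  have hCcne : Cc.index ≠ 1 := by
    intro h1
    have hCt : Cc = ⊤ := Subgroup.index_eq_one.mp h1
    have hZbot : Z ≤ ⊥ := by
      have : (⁅(⊤ : Subgroup Q).lowerCentralSeries 1, (⊤ : Subgroup Q)⁆ : Subgroup Q) ≤ ⊥ := by
        rw [Subgroup.commutator_le]
        intro x hx g _
        rw [Subgroup.mem_bot, commutatorElement_eq_one_iff_commute]
        have hgC : g ∈ Cc := hCt ▸ Subgroup.mem_top g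
        exact (Subgroup.mem_centralizer_iff.mp hgC) x
          (by rwa [Subgroup.top_lowerCentralSeries_one] at hx)
      exact this
    have h1' : Nat.card Z = 1 := by
      rw [le_bot_iff.mp hZbot]
      simp
    rw [h1'] at hZp
    exact hp.ne_one hZp.symm
  -- final assembly of `core`
  have hCcp : Cc.index = p := (hp.eq_one_or_self_of_dvd _ hdvd).resolve_left hCcne
  refine ⟨hCcp, ?_⟩
  have hQ'ne : commutator Q ≠ Cc := by
    intro h
    have hpp : p ^ 2 = p := by rw [← hidx, h, hCcp]
    nlinarith [hp.two_le]
  obtain ⟨c₀, hc₀C, hc₀Q'⟩ := SetLike.exists_of_lt (lt_of_le_of_ne hQ'C hQ'ne)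
  have hMle : Subgroup.zpowers c₀ ⊔ commutator Q ≤ Cc :=
    sup_le (Subgroup.zpowers_le.mpr hc₀C) hQ'C
  have hQ'M : commutator Q ≤ Subgroup.zpowers c₀ ⊔ commutator Q := le_sup_right
  have hrel : (commutator Q).relIndex Cc = p := by
    have := Subgroup.relIndex_mul_index hQ'C
    rw [hCcp, hidx, pow_two] at this
    exact Nat.eq_of_mul_eq_mul_right hp.pos this
  have hrel2 : (commutator Q).relIndex (Subgroup.zpowers c₀ ⊔ commutator Q) *
      (Subgroup.zpowers c₀ ⊔ commutator Q).relIndex Cc = p := by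
    rw [Subgroup.relIndex_mul_relIndex _ _ _ hQ'M hMle, hrel]
  have hr1ne : (commutator Q).relIndex (Subgroup.zpowers c₀ ⊔ commutator Q) ≠ 1 := by
    intro h1
    exact hc₀Q' (Subgroup.relIndex_eq_one.mp h1
      (Subgroup.mem_sup_left (Subgroup.mem_zpowers c₀)))
  have hr1p : (commutator Q).relIndex (Subgroup.zpowers c₀ ⊔ commutator Q) = p :=
    (hp.eq_one_or_self_of_dvd _ ⟨_, hrel2.symm⟩).resolve_left hr1ne
  have hr2 : (Subgroup.zpowers c₀ ⊔ commutator Q).relIndex Cc = 1 := by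
    rw [hr1p] at hrel2
    exact Nat.eq_of_mul_eq_mul_left hp.pos (by rw [hrel2, mul_one])
  have hCcM : Cc ≤ Subgroup.zpowers c₀ ⊔ commutator Q := Subgroup.relIndex_eq_one.mp hr2
  intro u hu v hv
  have hu' : u ∈ ((Subgroup.zpowers c₀ : Set Q) * (commutator Q : Set Q)) := by
    rw [← Subgroup.mul_normal (Subgroup.zpowers c₀) (commutator Q)]
    exact hCcM hu
  have hv' : v ∈ ((Subgroup.zpowers c₀ : Set Q) * (commutator Q : Set Q)) := by
    rw [← Subgroup.mul_normal (Subgroup.zpowers c₀) (commutator Q)]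
    exact hCcM hv
  obtain ⟨u1, hu1, x, hx, hu2⟩ := Set.mem_mul.mp hu'
  obtain ⟨v1, hv1, y, hy, hv2⟩ := Set.mem_mul.mp hv'
  obtain ⟨i, hi⟩ := Subgroup.mem_zpowers_iff.mp hu1
  obtain ⟨j, hj⟩ := Subgroup.mem_zpowers_iff.mp hv1
  have hcx : Commute c₀ x := ((Subgroup.mem_centralizer_iff.mp hc₀C) x hx).symm
  have hcy : Commute c₀ y := ((Subgroup.mem_centralizer_iff.mp hc₀C) y hy).symm
  have h1 : Commute (c₀ ^ i) (c₀ ^ j) := (Commute.refl c₀).zpow_zpow i j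
  have h2 : Commute (c₀ ^ i) y := hcy.zpow_left i
  have h3 : Commute x (c₀ ^ j) := hcx.symm.zpow_right j
  have h4 : Commute x y := habel x hx y hy
  rw [← hu2, ← hv2, ← hi, ← hj]
  exact Commute.mul_left (Commute.mul_right h1 h2) (Commute.mul_right h3 h4)

/-- Let `G` be a finite `p`-group with `|G : G'| = p^2` and `|γ₃(G) : γ₄(G)| = p`, and let
`C = C_G(G'/γ₄(G))`. Then `C` is a maximal subgroup of `G` and `C' ≤ γ₄(G)`. -/
theorem stmt9 (p : ℕ) [Fact p.Prime] (G : Type*) [Group G] [Finite G]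
    (hG : IsPGroup p G) (hidx : (commutator G).index = p ^ 2)
    (hsec : ((⊤ : Subgroup G).lowerCentralSeries 3).relIndex ((⊤ : Subgroup G).lowerCentralSeries 2) = p)
    (C : Subgroup G)
    (hC : ∀ g : G, g ∈ C ↔ ∀ x ∈ commutator G, ⁅g, x⁆ ∈ (⊤ : Subgroup G).lowerCentralSeries 3) :
    C.index = p ∧ (⁅C, C⁆ : Subgroup G) ≤ (⊤ : Subgroup G).lowerCentralSeries 3 := by
  have hp : p.Prime := Fact.out
  set K3 := (⊤ : Subgroup G).lowerCentralSeries 3 with hK3def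
  set π := QuotientGroup.mk' K3 with hπdef
  have hπs : Function.Surjective π := QuotientGroup.mk'_surjective K3
  have hkerπ : π.ker = K3 := QuotientGroup.ker_mk' K3
  -- hypotheses at the level of Q = G ⧸ K3
  have h3Q : (⊤ : Subgroup (G ⧸ K3)).lowerCentralSeries 3 = ⊥ := by
    rw [← lcs_map_surj π hπs 3, Subgroup.map_eq_bot_iff, hkerπ]
  have hZQ : Nat.card ((⊤ : Subgroup (G ⧸ K3)).lowerCentralSeries 2) = p := by
    rw [← lcs_map_surj π hπs 2, ← Subgroup.relIndex_ker ((⊤ : Subgroup G).lowerCentralSeries 2) π, hkerπ]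
    exact hsec
  have hcommQ : (commutator G).map π = commutator (G ⧸ K3) := by
    rw [commutator_def, Subgroup.map_commutator, Subgroup.map_top_of_surjective π hπs,
      commutator_def]
  have hK3le : K3 ≤ commutator G := by
    rw [← Subgroup.top_lowerCentralSeries_one]
    exact Subgroup.lowerCentralSeries_antitone _ (by norm_num)
  have hidxQ : (commutator (G ⧸ K3)).index = p ^ 2 := by
    rw [← hcommQ, Subgroup.index_map_eq _ hπs (by rw [hkerπ]; exact hK3le)]
    exact hidx
  obtain ⟨hCcidx, habel⟩ := core hp (G ⧸ K3) h3Q hZQ hidxQ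
  -- identification of C with the pullback of the centralizer
  have hCeq : C = Subgroup.comap π
      (Subgroup.centralizer (commutator (G ⧸ K3) : Set (G ⧸ K3))) := by
    ext g
    rw [hC g, Subgroup.mem_comap, Subgroup.mem_centralizer_iff]
    constructor
    · intro h h' hh'
      rw [← hcommQ] at hh'
      obtain ⟨x, hx, rfl⟩ := hh'
      have : ⁅g, x⁆ ∈ π.ker := by rw [hkerπ]; exact h x hx
      have h1 : ⁅π g, π x⁆ = 1 := by
        rw [← map_commutatorElement]
        exact MonoidHom.mem_ker.mp this
      exact (commutatorElement_eq_one_iff_commute.mp h1).symm.eq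
    · intro h x hx
      have hπx : π x ∈ commutator (G ⧸ K3) := by
        rw [← hcommQ]
        exact Subgroup.mem_map_of_mem π hx
      have h1 : Commute (π g) (π x) := (h (π x) hπx).symm
      have : π ⁅g, x⁆ = 1 := by
        rw [map_commutatorElement]
        exact commutatorElement_eq_one_iff_commute.mpr h1
      rw [← hkerπ]
      exact MonoidHom.mem_ker.mpr this
  constructor
  · rw [hCeq, Subgroup.index_comap_of_surjective _ hπs]
    exact hCcidx
  · rw [Subgroup.commutator_le]
    intro c hc d hd
    have hcC : π c ∈ Subgroup.centralizer (commutator (G ⧸ K3) : Set (G ⧸ K3)) := by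
      rw [hCeq] at hc; exact hc
    have hdC : π d ∈ Subgroup.centralizer (commutator (G ⧸ K3) : Set (G ⧸ K3)) := by
      rw [hCeq] at hd; exact hd
    have h1 : π ⁅c, d⁆ = 1 := by
      rw [map_commutatorElement]
      exact commutatorElement_eq_one_iff_commute.mpr (habel _ hcC _ hdC)
    rw [← hkerπ] at *
    exact MonoidHom.mem_ker.mpr h1
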